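/- (Chen's relation) Let x : [0,1] → ℝ^d be a Lipschitz path and 0 ≤ s ≤ t ≤ u ≤ 1. Then for every k ≥ 1 and all indices i₁,…,i_k ∈ {1,…,d}: g^{k,i₁,…,i_k}_{s,u} = Σ_{j=0}^{k} g^{j,i₁,…,i_j}_{s,t} · g^{k−j,i_{j+1},…,i_k}_{t,u}, where by convention a level-0 iterated integral equals 1. Equivalently, S_N(x)_{s,t} ⊗ S_N(x)_{t,u} = S_N(x)_{s,u} in the truncated tensor algebra. -/

import Mathlib

open MeasureTheory Set

/-- Iterated integral `g^{k,i₁,…,i_k}_{s,t} = ∫_{s<r₁<⋯<r_k<t} dx^{i₁}⋯dx^{i_k}` of the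
path with derivative `x'`, indexed by the word `[i₁,…,i_k]`. -/
noncomputable def iterInt {d : ℕ} (x' : ℝ → EuclideanSpace ℝ (Fin d)) :
    List (Fin d) → ℝ → ℝ → ℝ
  | [], _, _ => 1
  | i :: w, s, t => ∫ r in s..t, x' r i * iterInt x' w r t

/-- `x` is a Lipschitz path on `[0,1]` with (a.e. defined, bounded measurable)
derivative `x'`, encoded via the fundamental theorem of calculus. -/
def IsLipPath {d : ℕ} (x x' : ℝ → EuclideanSpace ℝ (Fin d)) : Prop :=
  Measurable x' ∧ (∃ L : ℝ, ∀ r, ‖x' r‖ ≤ L) ∧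
    ∀ t ∈ Set.Icc (0:ℝ) 1, x t = x 0 + ∫ r in (0:ℝ)..t, x' r

lemma coord_abs_le_norm {d : ℕ} (v : EuclideanSpace ℝ (Fin d)) (i : Fin d) : |v i| ≤ ‖v‖ := by
  rw [EuclideanSpace.norm_eq, ← Real.sqrt_sq_eq_abs]
  apply Real.sqrt_le_sqrt
  have := Finset.single_le_sum (f := fun j => ‖v j‖ ^ 2)
    (fun j _ => sq_nonneg _) (Finset.mem_univ i)
  simpa [Real.norm_eq_abs, sq_abs] using this

lemma key_int {d : ℕ} {x' : ℝ → EuclideanSpace ℝ (Fin d)} (hm : Measurable x')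
    {L : ℝ} (hL : ∀ r, ‖x' r‖ ≤ L) {g : ℝ → ℝ} (hg : Continuous g) (i : Fin d) (a b : ℝ) :
    IntervalIntegrable (fun r => x' r i * g r) volume a b := by
  have h1 : IntervalIntegrable (fun r => x' r i) volume a b := by
    apply IntervalIntegrable.mono_fun' (g := fun _ : ℝ => L) intervalIntegrable_const
    · exact ((measurable_pi_apply i).comp ((WithLp.measurable_ofLp _ _).comp hm)).aestronglyMeasurable
    · filter_upwards with r
      exact (coord_abs_le_norm (x' r) i).trans (hL r)
  exact h1.mul_continuousOn hg.continuousOn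

lemma iterInt_cont {d : ℕ} {x' : ℝ → EuclideanSpace ℝ (Fin d)} (hm : Measurable x')
    {L : ℝ} (hL : ∀ r, ‖x' r‖ ≤ L) :
    ∀ (w : List (Fin d)) (t : ℝ), Continuous fun s => iterInt x' w s t := by
  intro w
  induction w with
  | nil =>
    intro t
    simpa [iterInt] using continuous_const
  | cons i w ih =>
    intro t
    have hint : ∀ a b : ℝ,
        IntervalIntegrable (fun r => x' r i * iterInt x' w r t) volume a b :=
      fun a b => key_int hm hL (ih t) i a b
    have h := (intervalIntegral.continuous_primitive hint t).neg
    have heq : (fun s => iterInt x' (i :: w) s t)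
        = fun s => -∫ r in t..s, x' r i * iterInt x' w r t := by
      funext s
      simp only [iterInt]
      rw [intervalIntegral.integral_symm]
    rw [heq]
    exact h

lemma chen {d : ℕ} {x' : ℝ → EuclideanSpace ℝ (Fin d)} (hm : Measurable x')
    {L : ℝ} (hL : ∀ r, ‖x' r‖ ≤ L) :
    ∀ (w : List (Fin d)) (s t u : ℝ),
      iterInt x' w s u =
        ∑ j ∈ Finset.range (w.length + 1),
          iterInt x' (w.take j) s t * iterInt x' (w.drop j) t u := by
  intro w
  induction w with
  | nil => intro s t u; simp [iterInt]
  | cons i w ih =>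
    intro s t u
    have cont := iterInt_cont hm hL
    have hint : ∀ (v a b : ℝ),
        IntervalIntegrable (fun r => x' r i * iterInt x' w r v) volume a b :=
      fun v a b => key_int hm hL (cont w v) i a b
    have hsplit : iterInt x' (i :: w) s u
        = (∫ r in s..t, x' r i * iterInt x' w r u)
          + ∫ r in t..u, x' r i * iterInt x' w r u := by
      simp only [iterInt]
      exact (intervalIntegral.integral_add_adjacent_intervals (hint u s t) (hint u t u)).symm
    have hmid : (∫ r in s..t, x' r i * iterInt x' w r u)
        = ∑ j ∈ Finset.range (w.length + 1),
            iterInt x' (i :: w.take j) s t * iterInt x' (w.drop j) t u := by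
      have hpt : ∀ r, x' r i * iterInt x' w r u
          = ∑ j ∈ Finset.range (w.length + 1),
              (fun r => x' r i * iterInt x' (w.take j) r t) r * iterInt x' (w.drop j) t u := by
        intro r
        rw [ih r t u, Finset.mul_sum]
        refine Finset.sum_congr rfl fun j _ => ?_
        ring
      rw [intervalIntegral.integral_congr (fun r _ => hpt r)]
      rw [intervalIntegral.integral_finset_sum (fun j _ =>
        (key_int hm hL (cont (w.take j) t) i s t).mul_const _)]
      refine Finset.sum_congr rfl fun j _ => ?_
      rw [intervalIntegral.integral_mul_const]
      rfl
    have hlast : (∫ r in t..u, x' r i * iterInt x' w r u) = iterInt x' (i :: w) t u := rfl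
    have hrhs : ∑ j ∈ Finset.range ((i :: w).length + 1),
          iterInt x' ((i :: w).take j) s t * iterInt x' ((i :: w).drop j) t u
        = (∑ j ∈ Finset.range (w.length + 1),
            iterInt x' (i :: w.take j) s t * iterInt x' (w.drop j) t u)
          + iterInt x' (i :: w) t u := by
      rw [show (i :: w).length + 1 = (w.length + 1) + 1 from rfl]
      rw [Finset.sum_range_succ']
      simp only [List.take_succ_cons, List.drop_succ_cons, List.take_zero, List.drop_zero]
      rw [show iterInt x' ([] : List (Fin d)) s t = 1 from rfl, one_mul]
    rw [hsplit, hmid, hlast, hrhs]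

/-- (Chen's relation.) For a Lipschitz path `x` and `0 ≤ s ≤ t ≤ u ≤ 1`,
every iterated integral of `x` over `[s,u]` is the convolution of the iterated integrals
over `[s,t]` and `[t,u]`:
`g^{k,i₁,…,i_k}_{s,u} = Σ_{j=0}^k g^{j,i₁,…,i_j}_{s,t} * g^{k−j,i_{j+1},…,i_k}_{t,u}`,
a level-0 iterated integral being `1`; equivalently `S_N(x)_{s,t} ⊗ S_N(x)_{t,u} = S_N(x)_{s,u}`. -/
theorem statement5 {d : ℕ} (x x' : ℝ → EuclideanSpace ℝ (Fin d)) (hx : IsLipPath x x')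
    (s t u : ℝ) (hs : 0 ≤ s) (hst : s ≤ t) (htu : t ≤ u) (hu : u ≤ 1) :
    ∀ w : List (Fin d), 1 ≤ w.length →
      iterInt x' w s u =
        ∑ j ∈ Finset.range (w.length + 1),
          iterInt x' (w.take j) s t * iterInt x' (w.drop j) t u := by
  obtain ⟨hm, ⟨L, hL⟩, -⟩ := hx
  intro w _
  exact chen hm hL w s t u
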